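/- Let k ≥ 2 and L be integers with 1 ≤ L ≤ k−1, and for each integer d with 2 ≤ d ≤ k−L+1 set q(d,L) = d(d−1)·L·∏_{j=0}^{d−3}(k−L−1−j) / ∏_{j=0}^{d−1}(k−j). Then Σ_{d=2}^{k−L+1} q(d,L)/(d(d−1)) = 1/k. -/

import Mathlib

open Finset

/-- `q(d,L) = d(d−1)·L·∏_{j=0}^{d−3}(k−L−1−j) / ∏_{j=0}^{d−1}(k−j)`, the probability that an
output node of degree `d` is released when `L` input nodes remain unprocessed. -/
noncomputable def qRel (k L d : ℕ) : ℝ :=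
  ((d : ℝ) * ((d : ℝ) - 1) * L * ∏ j ∈ Finset.range (d - 2), ((k : ℝ) - L - 1 - j)) /
    ∏ j ∈ Finset.range d, ((k : ℝ) - j)

theorem stmt7 (k L : ℕ) (hk : 2 ≤ k) (hL1 : 1 ≤ L) (hL2 : L ≤ k - 1) :
    ∑ d ∈ Finset.Icc 2 (k - L + 1), qRel k L d / ((d : ℝ) * ((d : ℝ) - 1)) = 1 / k := by
  have hLk : L + 1 ≤ k := by omega
  set f : ℕ → ℝ := fun i =>
    (∏ j ∈ Finset.range i, ((k : ℝ) - L - 1 - j)) /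
      (∏ j ∈ Finset.range (i + 1), ((k : ℝ) - j)) with hf
  have hQ : ∀ n, n ≤ k → (∏ j ∈ Finset.range n, ((k : ℝ) - j)) ≠ 0 := by
    intro n hn
    apply Finset.prod_ne_zero_iff.mpr
    intro j hj
    have hjk : j < k := lt_of_lt_of_le (Finset.mem_range.mp hj) hn
    have : (j : ℝ) < k := by exact_mod_cast hjk
    linarith
  have key : ∀ i ∈ Finset.range (k - L),
      qRel k L (2 + i) / (((2 + i : ℕ) : ℝ) * (((2 + i : ℕ) : ℝ) - 1)) = f i - f (i + 1) := by
    intro i hi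
    have hik : i + 2 ≤ k := by
      have := Finset.mem_range.mp hi; omega
    have h1 : (∏ j ∈ Finset.range (i + 1), ((k : ℝ) - j)) ≠ 0 := hQ _ (by omega)
    have hK : ((k : ℝ) - ((i : ℝ) + 1)) ≠ 0 := by
      have : (i : ℝ) + 2 ≤ (k : ℝ) := by exact_mod_cast hik
      intro h; linarith
    have hi2 : ((i : ℝ) + 2) ≠ 0 := by positivity
    have hi1 : ((i : ℝ) + 1) ≠ 0 := by positivity
    simp only [hf]
    rw [show (2 + i) = i + 2 from by omega]
    simp only [qRel, show i + 2 - 2 = i from by omega]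
    rw [show i + 2 = (i + 1) + 1 from rfl,
      Finset.prod_range_succ (fun j => ((k : ℝ) - j)) (i + 1),
      Finset.prod_range_succ (fun j => ((k : ℝ) - (L : ℝ) - 1 - j)) i]
    push_cast
    set A := ∏ j ∈ Finset.range i, ((k : ℝ) - L - 1 - j) with hA
    set B := ∏ j ∈ Finset.range (i + 1), ((k : ℝ) - j) with hB
    have hi21 : ((i : ℝ) + 2 - 1) ≠ 0 := by
      intro h; have : (i : ℝ) ≥ 0 := Nat.cast_nonneg i; linarith
    field_simp
    ring
  have hsum :
      ∑ d ∈ Finset.Icc 2 (k - L + 1), qRel k L d / ((d : ℝ) * ((d : ℝ) - 1)) =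
        ∑ i ∈ Finset.range (k - L), (f i - f (i + 1)) := by
    rw [show Finset.Icc 2 (k - L + 1) = Finset.Ico 2 (k - L + 2) from by
      exact (Finset.Ico_add_one_right_eq_Icc 2 (k - L + 1)).symm, Finset.sum_Ico_eq_sum_range]
    have h2 : k - L + 2 - 2 = k - L := by omega
    rw [h2]
    exact Finset.sum_congr rfl key
  rw [hsum, Finset.sum_range_sub' f (k - L)]
  have hf0 : f 0 = 1 / k := by
    simp [hf]
  have hfn : f (k - L) = 0 := by
    have hmem : k - L - 1 ∈ Finset.range (k - L) := Finset.mem_range.mpr (by omega)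
    have hcast : ((k - L - 1 : ℕ) : ℝ) = (k : ℝ) - L - 1 := by
      rw [Nat.cast_sub (by omega : 1 ≤ k - L), Nat.cast_sub (by omega : L ≤ k)]
      push_cast; ring
    have hzero : ((k : ℝ) - L - 1 - ((k - L - 1 : ℕ) : ℝ)) = 0 := by
      rw [hcast]; ring
    show (∏ j ∈ Finset.range (k - L), ((k : ℝ) - L - 1 - j)) /
      (∏ j ∈ Finset.range (k - L + 1), ((k : ℝ) - j)) = 0
    rw [Finset.prod_eq_zero hmem hzero, zero_div]
  rw [hf0, hfn, sub_zero]
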